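/- The inverse of the block BFGS update H⁺ = DΔDᵀ + (I − DΔYᵀ)H(I − YΔDᵀ) is given by B⁺ = B + YΔYᵀ − BD(DᵀBD)⁻¹DᵀB, where B = H⁻¹. -/

import Mathlib

open Matrix

private lemma mulVecLin_inj {d q : ℕ} (D : Matrix (Fin d) (Fin q) ℝ) (hD : D.rank = q) :
    Function.Injective D.mulVecLin := by
  rw [← LinearMap.ker_eq_bot]
  have h := D.mulVecLin.finrank_range_add_finrank_ker
  rw [Matrix.rank] at hD
  simp [hD, Module.finrank_fin_fun] at h
  exact h

private lemma posdef_conj {d q : ℕ} (M : Matrix (Fin d) (Fin d) ℝ) (hM : M.PosDef)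
    (D : Matrix (Fin d) (Fin q) ℝ) (hinj : Function.Injective D.mulVecLin) :
    (Dᵀ * M * D).PosDef := by
  refine PosDef.of_dotProduct_mulVec_pos ?_ ?_
  · have := isHermitian_conjTranspose_mul_mul D hM.1
    simpa using this
  · intro x hx
    have hDx : D *ᵥ x ≠ 0 := fun h => hx (hinj (by simpa using h))
    have := hM.dotProduct_mulVec_pos hDx
    simpa only [star_mulVec, dotProduct_mulVec, vecMul_vecMul,
      ← conjTranspose_eq_transpose_of_trivial] using this

private lemma aux {d q : ℕ} (D : Matrix (Fin d) (Fin q) ℝ)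
    (G H B : Matrix (Fin d) (Fin d) ℝ) (Δ S : Matrix (Fin q) (Fin q) ℝ)
    (hGs : Gᵀ = G)
    (hΔ1 : Δ * (Dᵀ * (G * D)) = 1) (hΔ2 : Dᵀ * (G * (D * Δ)) = 1)
    (hHB : H * B = 1) (hS : Dᵀ * (B * (D * S)) = 1) :
    (D * Δ * Dᵀ + (1 - D * Δ * (G * D)ᵀ) * H * (1 - (G * D) * Δ * Dᵀ)) *
      (B + (G * D) * Δ * (G * D)ᵀ - B * D * S * Dᵀ * B) = 1 := by
  have hYT : (G * D)ᵀ = Dᵀ * G := by rw [transpose_mul, hGs]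
  have e1 : ∀ (n : ℕ) (X : Matrix (Fin q) (Fin n) ℝ), Δ * (Dᵀ * (G * (D * X))) = X := by
    intro n X
    calc Δ * (Dᵀ * (G * (D * X))) = (Δ * (Dᵀ * (G * D))) * X := by
          simp [Matrix.mul_assoc]
      _ = X := by rw [hΔ1, Matrix.one_mul]
  have e2 : ∀ (n : ℕ) (X : Matrix (Fin q) (Fin n) ℝ), Dᵀ * (G * (D * (Δ * X))) = X := by
    intro n X
    calc Dᵀ * (G * (D * (Δ * X))) = (Dᵀ * (G * (D * Δ))) * X := by
          simp [Matrix.mul_assoc]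
      _ = X := by rw [hΔ2, Matrix.one_mul]
  have e3 : ∀ (n : ℕ) (X : Matrix (Fin d) (Fin n) ℝ), H * (B * X) = X := by
    intro n X
    rw [← Matrix.mul_assoc, hHB, Matrix.one_mul]
  have e4 : ∀ (n : ℕ) (X : Matrix (Fin q) (Fin n) ℝ), Dᵀ * (B * (D * (S * X))) = X := by
    intro n X
    calc Dᵀ * (B * (D * (S * X))) = (Dᵀ * (B * (D * S))) * X := by
          simp [Matrix.mul_assoc]
      _ = X := by rw [hS, Matrix.one_mul]
  rw [hYT]
  simp only [Matrix.mul_add, Matrix.add_mul, Matrix.mul_sub, Matrix.sub_mul,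
    Matrix.mul_one, Matrix.one_mul, Matrix.mul_assoc, e1, e2, e3, e4, hΔ1, hΔ2, hHB, hS]
  abel

/-- The inverse of the block BFGS update `H⁺ = DΔDᵀ + (I − DΔYᵀ)H(I − YΔDᵀ)` is
`B⁺ = B + YΔYᵀ − BD(DᵀBD)⁻¹DᵀB` with `B = H⁻¹`; i.e. `H⁺ B⁺ = I`. -/
theorem block_bfgs_inverse_formula {d q : ℕ}
    (H G : Matrix (Fin d) (Fin d) ℝ) (hH : H.PosDef) (hG : G.PosDef)
    (D : Matrix (Fin d) (Fin q) ℝ) (hD : D.rank = q) :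
    let Y := G * D
    let Δ := (Dᵀ * Y)⁻¹
    let B := H⁻¹
    (D * Δ * Dᵀ + (1 - D * Δ * Yᵀ) * H * (1 - Y * Δ * Dᵀ)) *
      (B + Y * Δ * Yᵀ - B * D * (Dᵀ * B * D)⁻¹ * Dᵀ * B) = 1 := by
  intro Y Δ B
  have hinj := mulVecLin_inj D hD
  have hGs : Gᵀ = G := by
    rw [← conjTranspose_eq_transpose_of_trivial]; exact hG.1
  have hT : (Dᵀ * G * D).PosDef := posdef_conj G hG D hinj
  have hTd : IsUnit (Dᵀ * G * D).det := (Matrix.isUnit_iff_isUnit_det _).mp hT.isUnit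
  have hB : H⁻¹.PosDef := hH.inv
  have hSp : (Dᵀ * H⁻¹ * D).PosDef := posdef_conj H⁻¹ hB D hinj
  have hSd : IsUnit (Dᵀ * H⁻¹ * D).det := (Matrix.isUnit_iff_isUnit_det _).mp hSp.isUnit
  have hTd' : IsUnit (Dᵀ * (G * D)).det := by rwa [← Matrix.mul_assoc]
  have hΔ1 : (Dᵀ * (G * D))⁻¹ * (Dᵀ * (G * D)) = 1 :=
    Matrix.nonsing_inv_mul _ hTd'
  have hΔ2 : Dᵀ * (G * (D * (Dᵀ * (G * D))⁻¹)) = 1 := by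
    calc Dᵀ * (G * (D * (Dᵀ * (G * D))⁻¹)) = (Dᵀ * (G * D)) * (Dᵀ * (G * D))⁻¹ := by
          simp [Matrix.mul_assoc]
      _ = 1 := Matrix.mul_nonsing_inv _ hTd'
  have hHB : H * H⁻¹ = 1 :=
    Matrix.mul_nonsing_inv H ((Matrix.isUnit_iff_isUnit_det _).mp hH.isUnit)
  have hS : Dᵀ * (H⁻¹ * (D * (Dᵀ * H⁻¹ * D)⁻¹)) = 1 := by
    have := Matrix.mul_nonsing_inv _ hSd
    calc Dᵀ * (H⁻¹ * (D * (Dᵀ * H⁻¹ * D)⁻¹)) = (Dᵀ * H⁻¹ * D) * (Dᵀ * H⁻¹ * D)⁻¹ := by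
          simp [Matrix.mul_assoc]
      _ = 1 := this
  exact aux D G H H⁻¹ (Dᵀ * (G * D))⁻¹ (Dᵀ * H⁻¹ * D)⁻¹ hGs hΔ1 hΔ2 hHB hS
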